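/- (Lemma on hard constraints, part 1.) Suppose f_a ≥ 0 with k_a := ∑_{x_a} f_a(x_a) > 0 for all a ∈ A_BP, f_a > 0 for all a ∈ A_MF, the beliefs b_i (i ∈ I) are probability mass functions on S_i, the beliefs b_a (a ∈ A_BP) are probability mass functions on the configurations x_a, and the marginalization constraints b_i(x_i) = ∑_{x_a\x_i} b_a(x_a) hold for all a ∈ A_BP, i ∈ N(a). Then, interpreting F_BP,MF as an extended-real-valued sum with the conventions 0·ln 0 = 0 and t·ln(t/0) = +∞ for t > 0, one has F_BP,MF ≥ −∑_{a∈A} ln k_a; in particular F_BP,MF > −∞. -/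

import Mathlib

open Finset

abbrev Cfg {ι : Type} (S : ι → Type) (t : Finset ι) : Type :=
  ∀ j : {x // x ∈ t}, S j.1

private lemma coe_fsum {β : Type*} (s : Finset β) (g : β → ℝ) :
    ((∑ x ∈ s, g x : ℝ) : EReal) = ∑ x ∈ s, ((g x : ℝ) : EReal) :=
  map_sum (⟨⟨Real.toEReal, EReal.coe_zero⟩, EReal.coe_add⟩ : ℝ →+ EReal) g s

private lemma esum_ne_bot {β : Type*} (s : Finset β) (g : β → EReal)
    (h : ∀ x ∈ s, g x ≠ ⊥) : ∑ x ∈ s, g x ≠ ⊥ := by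
  classical
  induction s using Finset.induction_on with
  | empty => simp
  | @insert a s' ha ih =>
    rw [Finset.sum_insert ha, Ne, EReal.add_eq_bot_iff]
    push_neg
    exact ⟨h a (Finset.mem_insert_self _ _), ih fun x hx => h x (Finset.mem_insert_of_mem hx)⟩

private lemma esum_eq_top {β : Type*} {s : Finset β} {g : β → EReal} {x : β}
    (hx : x ∈ s) (hgx : g x = ⊤) (h : ∀ y ∈ s, g y ≠ ⊥) : ∑ y ∈ s, g y = ⊤ := by
  classical
  rw [← Finset.add_sum_erase _ _ hx, hgx]
  exact EReal.top_add_of_ne_bot (esum_ne_bot _ _ fun y hy => h y (Finset.mem_of_mem_erase hy))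

private lemma gibbs {β : Type*} [Fintype β] (p q : β → ℝ)
    (hp0 : ∀ x, 0 ≤ p x) (hq0 : ∀ x, 0 ≤ q x) (hp1 : ∑ x, p x = 1)
    (hpq : ∀ x, p x ≠ 0 → q x ≠ 0) (hk : 0 < ∑ x, q x) :
    -Real.log (∑ x, q x) ≤ ∑ x, p x * Real.log (p x / q x) := by
  classical
  set k := ∑ x, q x with hkdef
  set s := Finset.univ.filter (fun x => p x ≠ 0) with hs
  have hfull : ∀ (F : β → ℝ), (∀ x, p x = 0 → F x = 0) → ∑ x ∈ s, F x = ∑ x, F x :=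
    fun F hF => Finset.sum_filter_of_ne (fun x _ hFx hpx => hFx (hF x hpx))
  have hps : ∑ x ∈ s, p x = 1 := by rw [hfull p (fun x h => h)]; exact hp1
  have hqs : ∑ x ∈ s, q x ≤ k :=
    Finset.sum_le_sum_of_subset_of_nonneg (Finset.filter_subset _ _) (fun x _ _ => hq0 x)
  have hmain : ∑ x ∈ s, (p x - q x / k - p x * Real.log k) ≤ ∑ x ∈ s, p x * Real.log (p x / q x) := by
    apply Finset.sum_le_sum
    intro x hx
    have hpx : 0 < p x := lt_of_le_of_ne (hp0 x) (Ne.symm (Finset.mem_filter.mp hx).2)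
    have hqx : 0 < q x := lt_of_le_of_ne (hq0 x) (Ne.symm (hpq x (Finset.mem_filter.mp hx).2))
    have h1 : Real.log (q x / (p x * k)) ≤ q x / (p x * k) - 1 :=
      Real.log_le_sub_one_of_pos (by positivity)
    have h2 : Real.log (q x / (p x * k)) = Real.log (q x) - Real.log (p x) - Real.log k := by
      rw [Real.log_div (ne_of_gt hqx) (by positivity), Real.log_mul (ne_of_gt hpx) (ne_of_gt hk)]
      ring
    have h3 : Real.log (p x / q x) = Real.log (p x) - Real.log (q x) :=
      Real.log_div (ne_of_gt hpx) (ne_of_gt hqx)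
    rw [h2] at h1
    have h4 : 1 - q x / (p x * k) - Real.log k ≤ Real.log (p x) - Real.log (q x) := by linarith
    have h5 : p x * (q x / (p x * k)) = q x / k := by field_simp
    have h6 : p x * (1 - q x / (p x * k) - Real.log k) = p x - q x / k - p x * Real.log k := by
      rw [mul_sub, mul_sub, mul_one, h5]
    rw [h3]
    have h7 := mul_le_mul_of_nonneg_left h4 hpx.le
    linarith
  have e1 : ∑ x ∈ s, (p x - q x / k - p x * Real.log k)
      = 1 - (∑ x ∈ s, q x) / k - Real.log k := by
    rw [Finset.sum_sub_distrib, Finset.sum_sub_distrib, ← Finset.sum_div, ← Finset.sum_mul, hps,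
      one_mul]
  have e2 : (∑ x ∈ s, q x) / k ≤ 1 := (div_le_one hk).mpr hqs
  rw [← hfull (fun x => p x * Real.log (p x / q x)) (fun x h => by simp [h])]
  linarith

private lemma prod_pmf_sum {β : Type*} [Fintype β] [DecidableEq β]
    (κ : β → Type*) [∀ j, Fintype (κ j)] (g : ∀ j, κ j → ℝ)
    (hg1 : ∀ j, ∑ y, g j y = 1) :
    ∑ x : ∀ j, κ j, ∏ j, g j (x j) = 1 := by
  rw [← Fintype.prod_sum]
  simp [hg1]

private lemma prod_pmf_entropy {β : Type*} [Fintype β] [DecidableEq β]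
    (κ : β → Type*) [∀ j, Fintype (κ j)] (g : ∀ j, κ j → ℝ)
    (hg1 : ∀ j, ∑ y, g j y = 1) :
    ∑ x : ∀ j, κ j, (∏ j, g j (x j)) * Real.log (∏ j, g j (x j))
      = ∑ j, ∑ y, g j y * Real.log (g j y) := by
  classical
  have step1 : ∀ x : ∀ j, κ j, (∏ j, g j (x j)) * Real.log (∏ j, g j (x j))
      = ∑ j, (∏ j', g j' (x j')) * Real.log (g j (x j)) := by
    intro x
    by_cases h : ∀ j, g j (x j) ≠ 0
    · rw [Real.log_prod (fun j _ => h j), Finset.mul_sum]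
    · push_neg at h
      obtain ⟨j0, hj0⟩ := h
      have hz : (∏ j, g j (x j)) = 0 := Finset.prod_eq_zero (Finset.mem_univ j0) hj0
      simp [hz]
  rw [Finset.sum_congr rfl (fun x _ => step1 x), Finset.sum_comm]
  refine Finset.sum_congr rfl (fun j _ => ?_)
  set F : κ j → ℝ := fun y => g j y * Real.log (g j y) with hF
  have key : ∀ x : ∀ j', κ j', (∏ j', g j' (x j')) * Real.log (g j (x j))
      = ∏ j', (Function.update g j F) j' (x j') := by
    intro x
    have h1 : ∀ j' ∈ Finset.univ.erase j,
        (Function.update g j F) j' (x j') = g j' (x j') := by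
      intro j' hj'
      rw [Function.update_of_ne (Finset.mem_erase.mp hj').1]
    have e1 : ∏ j', (Function.update g j F) j' (x j')
        = F (x j) * ∏ j' ∈ Finset.univ.erase j, g j' (x j') := by
      rw [← Finset.mul_prod_erase Finset.univ _ (Finset.mem_univ j), Function.update_self]
      exact congrArg _ (Finset.prod_congr rfl h1)
    have e2 : ∏ j', g j' (x j') = g j (x j) * ∏ j' ∈ Finset.univ.erase j, g j' (x j') :=
      (Finset.mul_prod_erase Finset.univ _ (Finset.mem_univ j)).symm
    rw [e1, e2, hF]
    ring
  rw [Finset.sum_congr rfl (fun x _ => key x), ← Fintype.prod_sum,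
    ← Finset.mul_prod_erase Finset.univ _ (Finset.mem_univ j)]
  have h2 : ∀ j' ∈ Finset.univ.erase j, (∑ y, (Function.update g j F) j' y) = 1 := by
    intro j' hj'
    rw [show (Function.update g j F) j' = g j' from Function.update_of_ne (Finset.mem_erase.mp hj').1 _ _]
    exact hg1 j'
  rw [Finset.prod_congr rfl h2, Finset.prod_const_one, mul_one, Function.update_self]

theorem statement4
    {ι α : Type} [Fintype ι] [Fintype α] [DecidableEq ι] [DecidableEq α]
    (S : ι → Type) [∀ i, Fintype (S i)] [∀ i, Nonempty (S i)] [∀ i, DecidableEq (S i)]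
    (N : α → Finset ι) (αBP αMF : Finset α)
    (hdisj : Disjoint αBP αMF) (hcov : αBP ∪ αMF = Finset.univ)
    (hIcov : ∀ i : ι, i ∈ αBP.biUnion N ∪ αMF.biUnion N)
    (f : ∀ a : α, Cfg S (N a) → ℝ)
    (hfBP : ∀ a ∈ αBP, ∀ xa, 0 ≤ f a xa)
    (hkBP : ∀ a ∈ αBP, 0 < ∑ xa : Cfg S (N a), f a xa)
    (hfMF : ∀ a ∈ αMF, ∀ xa, 0 < f a xa)
    (ba : ∀ a : α, Cfg S (N a) → ℝ) (bi : ∀ i : ι, S i → ℝ)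
    (hba0 : ∀ a ∈ αBP, ∀ xa, 0 ≤ ba a xa)
    (hba1 : ∀ a ∈ αBP, ∑ xa : Cfg S (N a), ba a xa = 1)
    (hbi0 : ∀ i : ι, ∀ xi, 0 ≤ bi i xi)
    (hbi1 : ∀ i : ι, ∑ xi : S i, bi i xi = 1)
    (hmarg : ∀ a ∈ αBP, ∀ i : ι, ∀ hi : i ∈ N a, ∀ xi : S i,
      bi i xi = ∑ xa : Cfg S (N a), (if xa ⟨i, hi⟩ = xi then ba a xa else 0))
    (F : EReal)
    (hF : F = (∑ a ∈ αBP, ∑ xa : Cfg S (N a),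
          (if ba a xa = 0 then (0 : EReal)
           else if f a xa = 0 then (⊤ : EReal)
           else ((ba a xa * Real.log (ba a xa / f a xa) : ℝ) : EReal)))
        + (((-(∑ a ∈ αMF, ∑ xa : Cfg S (N a),
            (∏ j : {x // x ∈ N a}, bi j.1 (xa j)) * Real.log (f a xa))) : ℝ) : EReal)
        + (((-(∑ i : ι, ((((αBP.filter (fun c => i ∈ N c)).card : ℝ) - 1) *
            ∑ xi : S i, bi i xi * Real.log (bi i xi)))) : ℝ) : EReal)) :
    (((-(∑ a : α, Real.log (∑ xa : Cfg S (N a), f a xa))) : ℝ) : EReal) ≤ F ∧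
      (⊥ : EReal) < F := by
  classical
  by_cases hcase : ∃ a ∈ αBP, ∃ xa : Cfg S (N a), ba a xa ≠ 0 ∧ f a xa = 0
  · -- F = ⊤
    obtain ⟨a0, ha0, xa0, hb0, hf0⟩ := hcase
    have hterm : ∀ a ∈ αBP, ∀ xa : Cfg S (N a),
        (if ba a xa = 0 then (0 : EReal)
         else if f a xa = 0 then (⊤ : EReal)
         else ((ba a xa * Real.log (ba a xa / f a xa) : ℝ) : EReal)) ≠ ⊥ := by
      intro a _ xa
      by_cases h1 : ba a xa = 0
      · simp [h1]
      by_cases h2 : f a xa = 0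
      · simp [h1, h2]
      · rw [if_neg h1, if_neg h2]; exact EReal.coe_ne_bot _
    have hinner_ne : ∀ a ∈ αBP, (∑ xa : Cfg S (N a),
        (if ba a xa = 0 then (0 : EReal)
         else if f a xa = 0 then (⊤ : EReal)
         else ((ba a xa * Real.log (ba a xa / f a xa) : ℝ) : EReal))) ≠ ⊥ :=
      fun a ha => esum_ne_bot _ _ (fun xa _ => hterm a ha xa)
    have hinner_top : (∑ xa : Cfg S (N a0),
        (if ba a0 xa = 0 then (0 : EReal)
         else if f a0 xa = 0 then (⊤ : EReal)
         else ((ba a0 xa * Real.log (ba a0 xa / f a0 xa) : ℝ) : EReal))) = ⊤ :=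
      esum_eq_top (Finset.mem_univ xa0) (by rw [if_neg hb0, if_pos hf0])
        (fun xa _ => hterm a0 ha0 xa)
    have hT1 : (∑ a ∈ αBP, ∑ xa : Cfg S (N a),
        (if ba a xa = 0 then (0 : EReal)
         else if f a xa = 0 then (⊤ : EReal)
         else ((ba a xa * Real.log (ba a xa / f a xa) : ℝ) : EReal))) = ⊤ :=
      esum_eq_top ha0 hinner_top hinner_ne
    rw [hF, hT1, EReal.top_add_of_ne_bot (EReal.coe_ne_bot _),
      EReal.top_add_of_ne_bot (EReal.coe_ne_bot _)]
    exact ⟨le_top, bot_lt_top⟩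
  · push_neg at hcase
    have hT1 : (∑ a ∈ αBP, ∑ xa : Cfg S (N a),
        (if ba a xa = 0 then (0 : EReal)
         else if f a xa = 0 then (⊤ : EReal)
         else ((ba a xa * Real.log (ba a xa / f a xa) : ℝ) : EReal)))
        = (((∑ a ∈ αBP, ∑ xa : Cfg S (N a), ba a xa * Real.log (ba a xa / f a xa)) : ℝ) : EReal) := by
      rw [coe_fsum]
      refine Finset.sum_congr rfl (fun a ha => ?_)
      rw [coe_fsum]
      refine Finset.sum_congr rfl (fun xa _ => ?_)
      by_cases hb : ba a xa = 0
      · rw [if_pos hb, hb, zero_mul]; simp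
      · rw [if_neg hb, if_neg (hcase a ha xa hb)]
    rw [hF, hT1, ← EReal.coe_add, ← EReal.coe_add]
    refine ⟨EReal.coe_le_coe_iff.mpr ?_, EReal.bot_lt_coe _⟩
    -- BP bound
    have hBPa : ∀ a ∈ αBP, -Real.log (∑ xa : Cfg S (N a), f a xa)
        ≤ ∑ xa : Cfg S (N a), ba a xa * Real.log (ba a xa / f a xa) :=
      fun a ha => gibbs (ba a) (f a) (hba0 a ha) (hfBP a ha) (hba1 a ha)
        (fun xa h => hcase a ha xa h) (hkBP a ha)
    -- MF bound
    have hMFa : ∀ a ∈ αMF,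
        -Real.log (∑ xa : Cfg S (N a), f a xa)
          - (∑ j : {x // x ∈ N a}, ∑ y : S j.1, bi j.1 y * Real.log (bi j.1 y))
        ≤ -(∑ xa : Cfg S (N a), (∏ j : {x // x ∈ N a}, bi j.1 (xa j)) * Real.log (f a xa)) := by
      intro a ha
      have hq0 : ∀ xa : Cfg S (N a), 0 ≤ ∏ j : {x // x ∈ N a}, bi j.1 (xa j) :=
        fun xa => Finset.prod_nonneg (fun j _ => hbi0 _ _)
      have hq1 : ∑ xa : Cfg S (N a), ∏ j : {x // x ∈ N a}, bi j.1 (xa j) = 1 :=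
        prod_pmf_sum _ _ (fun j => hbi1 j.1)
      have hk : 0 < ∑ xa : Cfg S (N a), f a xa :=
        Finset.sum_pos (fun xa _ => hfMF a ha xa) Finset.univ_nonempty
      have hg := gibbs (fun xa : Cfg S (N a) => ∏ j : {x // x ∈ N a}, bi j.1 (xa j)) (f a)
        hq0 (fun xa => (hfMF a ha xa).le) hq1 (fun xa _ => (hfMF a ha xa).ne') hk
      have hsplit : ∑ xa : Cfg S (N a), (∏ j : {x // x ∈ N a}, bi j.1 (xa j))
            * Real.log ((∏ j : {x // x ∈ N a}, bi j.1 (xa j)) / f a xa)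
          = (∑ xa : Cfg S (N a), (∏ j : {x // x ∈ N a}, bi j.1 (xa j))
              * Real.log (∏ j : {x // x ∈ N a}, bi j.1 (xa j)))
            - ∑ xa : Cfg S (N a), (∏ j : {x // x ∈ N a}, bi j.1 (xa j)) * Real.log (f a xa) := by
        rw [← Finset.sum_sub_distrib]
        refine Finset.sum_congr rfl (fun xa _ => ?_)
        by_cases h : (∏ j : {x // x ∈ N a}, bi j.1 (xa j)) = 0
        · rw [h]; ring
        · rw [Real.log_div h (hfMF a ha xa).ne']; ring
      have hent : ∑ xa : Cfg S (N a), (∏ j : {x // x ∈ N a}, bi j.1 (xa j))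
            * Real.log (∏ j : {x // x ∈ N a}, bi j.1 (xa j))
          = ∑ j : {x // x ∈ N a}, ∑ y : S j.1, bi j.1 y * Real.log (bi j.1 y) :=
        prod_pmf_entropy _ _ (fun j => hbi1 j.1)
      rw [hsplit, hent] at hg
      linarith
    -- entropy nonpositivity
    have he_nonpos : ∀ i : ι, (∑ xi : S i, bi i xi * Real.log (bi i xi)) ≤ 0 := by
      intro i
      apply Finset.sum_nonpos
      intro y _
      have hle : bi i y ≤ 1 := by
        rw [← hbi1 i]
        exact Finset.single_le_sum (fun z _ => hbi0 i z) (Finset.mem_univ y)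
      have := Real.log_nonpos (hbi0 i y) hle
      nlinarith [hbi0 i y]
    -- double counting
    have hdouble : ∑ a ∈ αMF, ∑ j : {x // x ∈ N a}, ∑ y : S j.1, bi j.1 y * Real.log (bi j.1 y)
        = ∑ i : ι, ((αMF.filter (fun c => i ∈ N c)).card : ℝ)
            * ∑ xi : S i, bi i xi * Real.log (bi i xi) := by
      have h1 : ∀ a : α, ∑ j : {x // x ∈ N a}, ∑ y : S j.1, bi j.1 y * Real.log (bi j.1 y)
          = ∑ i : ι, if i ∈ N a then (∑ xi : S i, bi i xi * Real.log (bi i xi)) else 0 := by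
        intro a
        rw [Fintype.sum_ite_mem (N a) (fun i => ∑ xi : S i, bi i xi * Real.log (bi i xi))]
        exact Finset.sum_coe_sort (N a) (fun i => ∑ xi : S i, bi i xi * Real.log (bi i xi))
      rw [Finset.sum_congr rfl (fun a _ => h1 a), Finset.sum_comm]
      refine Finset.sum_congr rfl (fun i _ => ?_)
      rw [Finset.sum_ite, Finset.sum_const_zero, add_zero, Finset.sum_const, nsmul_eq_mul]
    -- coefficient bound
    have hcm : ∀ i : ι, 1 ≤ (αBP.filter (fun c => i ∈ N c)).card
        + (αMF.filter (fun c => i ∈ N c)).card := by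
      intro i
      rcases Finset.mem_union.mp (hIcov i) with h | h
      · obtain ⟨a, ha, hia⟩ := Finset.mem_biUnion.mp h
        have : 0 < (αBP.filter (fun c => i ∈ N c)).card :=
          Finset.card_pos.mpr ⟨a, Finset.mem_filter.mpr ⟨ha, hia⟩⟩
        omega
      · obtain ⟨a, ha, hia⟩ := Finset.mem_biUnion.mp h
        have : 0 < (αMF.filter (fun c => i ∈ N c)).card :=
          Finset.card_pos.mpr ⟨a, Finset.mem_filter.mpr ⟨ha, hia⟩⟩
        omega
    -- combining entropy terms
    have hEnt : 0 ≤ -(∑ i : ι, ((αMF.filter (fun c => i ∈ N c)).card : ℝ)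
            * ∑ xi : S i, bi i xi * Real.log (bi i xi))
          - ∑ i : ι, ((((αBP.filter (fun c => i ∈ N c)).card : ℝ) - 1)
            * ∑ xi : S i, bi i xi * Real.log (bi i xi)) := by
      have hid : ∑ i : ι, ((((αBP.filter (fun c => i ∈ N c)).card : ℝ)
              + ((αMF.filter (fun c => i ∈ N c)).card : ℝ) - 1)
            * (-(∑ xi : S i, bi i xi * Real.log (bi i xi))))
          = -(∑ i : ι, ((αMF.filter (fun c => i ∈ N c)).card : ℝ)
              * ∑ xi : S i, bi i xi * Real.log (bi i xi))
            - ∑ i : ι, ((((αBP.filter (fun c => i ∈ N c)).card : ℝ) - 1)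
              * ∑ xi : S i, bi i xi * Real.log (bi i xi)) := by
        rw [← Finset.sum_neg_distrib, ← Finset.sum_sub_distrib]
        exact Finset.sum_congr rfl (fun i _ => by ring)
      rw [← hid]
      apply Finset.sum_nonneg
      intro i _
      apply mul_nonneg
      · have := hcm i
        have h2 : (1 : ℝ) ≤ ((αBP.filter (fun c => i ∈ N c)).card : ℝ)
            + ((αMF.filter (fun c => i ∈ N c)).card : ℝ) := by exact_mod_cast this
        linarith
      · linarith [he_nonpos i]
    -- assemble
    have hsplitk : ∑ a : α, Real.log (∑ xa : Cfg S (N a), f a xa)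
        = (∑ a ∈ αBP, Real.log (∑ xa : Cfg S (N a), f a xa))
          + ∑ a ∈ αMF, Real.log (∑ xa : Cfg S (N a), f a xa) := by
      rw [← hcov, Finset.sum_union hdisj]
    have hG : -(∑ a ∈ αBP, Real.log (∑ xa : Cfg S (N a), f a xa))
        ≤ ∑ a ∈ αBP, ∑ xa : Cfg S (N a), ba a xa * Real.log (ba a xa / f a xa) := by
      rw [← Finset.sum_neg_distrib]
      exact Finset.sum_le_sum hBPa
    have hM : -(∑ a ∈ αMF, Real.log (∑ xa : Cfg S (N a), f a xa))
          - (∑ a ∈ αMF, ∑ j : {x // x ∈ N a}, ∑ y : S j.1, bi j.1 y * Real.log (bi j.1 y))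
        ≤ -(∑ a ∈ αMF, ∑ xa : Cfg S (N a),
            (∏ j : {x // x ∈ N a}, bi j.1 (xa j)) * Real.log (f a xa)) := by
      rw [← Finset.sum_neg_distrib, ← Finset.sum_neg_distrib, ← Finset.sum_sub_distrib]
      exact Finset.sum_le_sum hMFa
    rw [hdouble] at hM
    linarith
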